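/- Suppose a Hermitian operator H on ℂ^d satisfies exp(-iHτ) = Π for a permutation matrix Π, and H has the spectral form H = (1/τ) Σ_{λ,a} ε_λ^{(a)} |y_λ^{(a)}⟩⟨y_λ^{(a)}| where each |y_λ^{(a)}⟩ is a linear combination of cycle eigenvectors v_i^{(λ)} (each uniform in modulus over its cycle support Ω_i). Then the diagonal entries of H are constant on each cycle: ⟨k|H|k⟩ = ⟨k'|H|k'⟩ whenever k, k' belong to the same cycle support Ω_i. -/

import Mathlib

/-- Suppose a Hermitian `H` on `ℂ^d` satisfies `exp(-iHτ) = P` for a permutation matrix `P`,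
and `H` has the spectral form `H = (1/τ) Σ_{λ,a} ε_λ^{(a)} |y_λ^{(a)}⟩⟨y_λ^{(a)}|` where each
`y_λ^{(a)} = Σ_i β_{a,i}^{(λ)} v_i^{(λ)}` is a linear combination of cycle eigenvectors
`v_i^{(λ)}` (each supported on its cycle support `Ω_i` with uniform modulus `1/√d_i` there).
Then the diagonal entries of `H` are constant on each cycle: `⟨k|H|k⟩ = ⟨k'|H|k'⟩` whenever
`k, k'` belong to the same cycle support `Ω_i`. -/
theorem stmt_17 {d : ℕ} {C ι : Type*} [Fintype C] [Fintype ι] [DecidableEq ι]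
    (π : Equiv.Perm (Fin d)) (P : Matrix (Fin d) (Fin d) ℂ)
    (hP : ∀ i j : Fin d, P i j = if i = π j then 1 else 0)
    (Ω : C → Finset (Fin d))
    (hΩdisj : ∀ c c' : C, c ≠ c' → Disjoint (Ω c) (Ω c'))
    (hΩinv : ∀ (c : C), ∀ k ∈ Ω c, π k ∈ Ω c)
    (dd : C → ℕ) (hdd : ∀ c, (Ω c).card = dd c) (hddpos : ∀ c, 0 < dd c)
    (τ : ℝ) (hτ : 0 < τ)
    (lam : ι → ℂ) (x : ι → ℤ) (ε : ι → ℝ)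
    (hε : ∀ i, ε i = -(lam i).arg + 2 * Real.pi * (x i : ℝ))
    (v : C → ℂ → (Fin d → ℂ))
    (hvmod : ∀ (c : C) (μ : ℂ), ∀ k ∈ Ω c, ‖v c μ k‖ = 1 / Real.sqrt (dd c))
    (hvsupp : ∀ (c : C) (μ : ℂ), ∀ k : Fin d, k ∉ Ω c → v c μ k = 0)
    (β : ι → C → ℂ) (y : ι → (Fin d → ℂ))
    (hy : ∀ i, y i = ∑ c : C, β i c • v c (lam i))
    (hyortho : ∀ i j, dotProduct (star (y i)) (y j) = if i = j then 1 else 0)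
    (H : Matrix (Fin d) (Fin d) ℂ) (hHherm : H.IsHermitian)
    (hH : H = (1 / (τ : ℂ)) • ∑ i : ι,
      ((ε i : ℝ) : ℂ) • Matrix.vecMulVec (y i) (star (y i)))
    (hexp : NormedSpace.exp ((-(Complex.I * (τ : ℂ))) • H) = P) :
    ∀ c : C, ∀ k ∈ Ω c, ∀ k' ∈ Ω c, H k k = H k' k' := by

  intro c k hk k' hk'
  have hyval : ∀ (i : ι) (m : Fin d), m ∈ Ω c → y i m = β i c * v c (lam i) m := by
    intro i m hm
    rw [hy i]
    simp only [Finset.sum_apply, Pi.smul_apply, smul_eq_mul]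
    rw [Fintype.sum_eq_single c]
    intro c' hc'
    rw [hvsupp c' (lam i) m (fun hmem => Finset.disjoint_left.mp (hΩdisj c' c hc') hmem hm),
      mul_zero]
  have habs : ∀ i : ι, (y i k) * star (y i k) = (y i k') * star (y i k') := by
    intro i
    have h1 : ‖y i k‖ = ‖y i k'‖ := by
      rw [hyval i k hk, hyval i k' hk', norm_mul, norm_mul,
        hvmod c (lam i) k hk, hvmod c (lam i) k' hk']
    have e : ∀ z : ℂ, z * star z = ((‖z‖ : ℝ) : ℂ) ^ 2 := by
      intro z
      rw [show (star z) = (starRingEnd ℂ) z from rfl, Complex.mul_conj,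
        Complex.normSq_eq_norm_sq]
      push_cast
      ring
    rw [e, e, h1]
  rw [hH]
  simp only [Matrix.smul_apply, Matrix.sum_apply, Matrix.vecMulVec_apply, Pi.star_apply,
    smul_eq_mul]
  congr 1
  exact Finset.sum_congr rfl (fun i _ => by rw [habs i])
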